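/- Let (φ, μ) be admissible with supp φ̂ ⊂ [−L,L], and suppose 0 < ν < (2L + μ)^{−1}. Then for every p and every k ∈ ℤ \ {0}, the supports of Φ_p(· − kβ(p)/ν) and Φ_p are disjoint; consequently Σ_{p∈ℤ} Σ_{k≠0} T_{kβ(p)/ν} f̂ · conj(Φ_p)(· − kβ(p)/ν) · Φ_p vanishes identically for all f. -/

import Mathlib

open MeasureTheory Complex Real FourierTransform

noncomputable def iS (α : ℝ) : ℕ → ℕ × ℕ
  | 0 => (0, 1)
  | p + 1 => ((iS α p).2, (iS α p).2 + ⌊((iS α p).2 : ℝ) ^ α⌋₊)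

/-- `i_p`, the left endpoint of the `p`-th interval. -/
noncomputable def ip (α : ℝ) (p : ℕ) : ℕ := (iS α p).1
/-- `s_p`, the right endpoint of the `p`-th interval. -/
noncomputable def sp (α : ℝ) (p : ℕ) : ℕ := (iS α p).2
/-- `β(p) = s_p - i_p`, the width of the `p`-th interval. -/
noncomputable def βp (α : ℝ) (p : ℕ) : ℕ := sp α p - ip α p

/-- The `ℤ`-indexed intervals of the α-partition: for `p < 0`, `I_p = -I_{-p}`. -/
noncomputable def IpZ (α : ℝ) (p : ℤ) : Finset ℤ :=
  if 0 ≤ p then Finset.Ico (ip α p.toNat : ℤ) (sp α p.toNat : ℤ)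
  else Finset.image (fun n => -n) (Finset.Ico (ip α (-p).toNat : ℤ) (sp α (-p).toNat : ℤ))

/-- Width of the `ℤ`-indexed interval `I_p`. -/
noncomputable def βZ (α : ℝ) (p : ℤ) : ℕ := βp α p.natAbs

/-- The scaled interval `μ I_p` as a subset of `ℝ`. -/
noncomputable def muIpZ (α μ : ℝ) (p : ℤ) : Set ℝ :=
  ↑(Finset.image (fun η : ℤ => μ * (η : ℝ)) (IpZ α p))

/-- `Φ_p(ω) = Σ_{η ∈ μ I_p} g(ω - η)`, where `g` plays the role of `φ̂`. -/
noncomputable def Φ (α μ : ℝ) (g : ℝ → ℂ) (p : ℤ) (ω : ℝ) : ℂ :=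
  ∑ η ∈ IpZ α p, g (ω - μ * (η : ℝ))

/-- The α-DOST frame element `φ_{p,k}`. -/
noncomputable def dostEl (α μ ν : ℝ) (φ : ℝ → ℂ) (p k : ℤ) (t : ℝ) : ℂ :=
  ((βZ α p : ℝ) ^ (-(1:ℝ)/2) : ℝ) *
    ∑ η ∈ IpZ α p,
      Complex.exp (2 * π * Complex.I * (μ * (η : ℝ)) * (t - (k : ℝ) * ν / (βZ α p : ℝ))) *
        φ (t - (k : ℝ) * ν / (βZ α p : ℝ))

lemma one_le_sp (α : ℝ) (p : ℕ) : 1 ≤ sp α p := by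
  induction p with
  | zero => simp [sp, iS]
  | succ n ih => simp only [sp, iS] at ih ⊢; omega

lemma ip_le_sp (α : ℝ) (p : ℕ) : ip α p ≤ sp α p := by
  cases p with
  | zero => simp [ip, sp, iS]
  | succ n => simp [ip, sp, iS]

lemma one_le_βp (α : ℝ) (hα : 0 ≤ α) (p : ℕ) : 1 ≤ βp α p := by
  cases p with
  | zero => simp [βp, ip, sp, iS]
  | succ n =>
    have h1 : 1 ≤ sp α n := one_le_sp α n
    have h2 : (1:ℝ) ≤ ((sp α n : ℕ) : ℝ) ^ α := by
      apply Real.one_le_rpow (by exact_mod_cast h1) hα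
    have h3 : 1 ≤ ⌊((sp α n : ℕ) : ℝ) ^ α⌋₊ := by
      apply Nat.le_floor; exact_mod_cast h2
    simp only [sp] at h3
    simp only [βp, ip, sp, iS]
    omega

lemma spread (α : ℝ) (p : ℤ) {η₁ η₂ : ℤ} (h₁ : η₁ ∈ IpZ α p) (h₂ : η₂ ∈ IpZ α p) :
    |η₁ - η₂| ≤ (βZ α p : ℤ) - 1 := by
  have hβ : ∀ q : ℕ, (βp α q : ℤ) = (sp α q : ℤ) - (ip α q : ℤ) := by
    intro q
    have := ip_le_sp α q
    simp [βp]; omega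
  unfold IpZ at h₁ h₂
  by_cases hp : 0 ≤ p
  · simp only [if_pos hp, Finset.mem_Ico] at h₁ h₂
    have hnat : p.toNat = p.natAbs := by omega
    rw [βZ, ← hnat, hβ]
    rw [abs_le]; omega
  · simp only [if_neg hp, Finset.mem_image, Finset.mem_Ico] at h₁ h₂
    obtain ⟨n₁, hn₁, rfl⟩ := h₁
    obtain ⟨n₂, hn₂, rfl⟩ := h₂
    have hnat : (-p).toNat = p.natAbs := by omega
    rw [βZ, ← hnat, hβ]
    rw [abs_le]; omega

/-- for `0 < ν < (2L+μ)⁻¹` the translated supports of `Φ_p` are disjoint,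
and the off-diagonal Walnut sum vanishes identically. -/
theorem offdiag_vanishes (α : ℝ) (hα : α ∈ Set.Icc (0:ℝ) 1) (φ : SchwartzMap ℝ ℂ)
    (L μ : ℝ) (hL : 0 < L) (hμ : 0 < μ)
    (hsupp : Function.support (𝓕 ⇑φ) ⊆ Set.Icc (-L) L)
    (hrange : ∀ ω : ℝ, ∃ r : ℝ, 𝓕 ⇑φ ω = (r : ℂ) ∧ 0 ≤ r ∧ r ≤ 1)
    (ν : ℝ) (hν : 0 < ν) (hν' : ν < (2 * L + μ)⁻¹) :
    (∀ (p : ℤ) (k : ℤ), k ≠ 0 →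
        Disjoint
          (Function.support (fun ω : ℝ => Φ α μ (𝓕 ⇑φ) p (ω - (k : ℝ) * (βZ α p : ℝ) / ν)))
          (Function.support (Φ α μ (𝓕 ⇑φ) p))) ∧
      ∀ (f : ℝ → ℂ) (ω : ℝ),
        (∑' (p : ℤ) (k : {k : ℤ // k ≠ 0}),
          f (ω - ((k : ℤ) : ℝ) * (βZ α p : ℝ) / ν) *
            (starRingEnd ℂ) (Φ α μ (𝓕 ⇑φ) p (ω - ((k : ℤ) : ℝ) * (βZ α p : ℝ) / ν)) *
              Φ α μ (𝓕 ⇑φ) p ω) = 0 := by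
  -- support extraction for Φ
  have hPhi : ∀ (p : ℤ) (x : ℝ), Φ α μ (𝓕 ⇑φ) p x ≠ 0 →
      ∃ η ∈ IpZ α p, |x - μ * (η : ℝ)| ≤ L := by
    intro p x hx
    obtain ⟨η, hη, hne⟩ := Finset.exists_ne_zero_of_sum_ne_zero hx
    refine ⟨η, hη, ?_⟩
    have := hsupp hne
    rw [Set.mem_Icc] at this
    rw [abs_le]; exact this
  have key : ∀ (p : ℤ) (k : ℤ), k ≠ 0 → ∀ ω : ℝ,
      Φ α μ (𝓕 ⇑φ) p (ω - (k : ℝ) * (βZ α p : ℝ) / ν) = 0 ∨ Φ α μ (𝓕 ⇑φ) p ω = 0 := by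
    intro p k hk ω
    by_contra h
    push_neg at h
    obtain ⟨h1, h2⟩ := h
    obtain ⟨η₁, hη₁, hb₁⟩ := hPhi p _ h1
    obtain ⟨η₂, hη₂, hb₂⟩ := hPhi p _ h2
    have hspread := spread α p hη₁ hη₂
    set b : ℝ := (βZ α p : ℝ) with hb
    have hb1 : 1 ≤ b := by
      have h := one_le_βp α hα.1 p.natAbs
      rw [hb]; unfold βZ; exact_mod_cast h
    have hbk : (1:ℝ) ≤ |(k : ℝ)| := by
      have : (1:ℤ) ≤ |k| := by
        have h1 : |k| ≠ 0 := abs_ne_zero.mpr hk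
        have h2 : 0 ≤ |k| := abs_nonneg k
        omega
      calc (1:ℝ) ≤ (|k| : ℤ) := by exact_mod_cast this
        _ = |(k:ℝ)| := by push_cast [Int.cast_abs]; ring
    set T : ℝ := (k : ℝ) * b / ν with hT
    have hTabs : b / ν ≤ |T| := by
      rw [hT, abs_div, abs_mul]
      rw [abs_of_pos hν, abs_of_pos (by linarith : (0:ℝ) < b)]
      rw [div_le_div_iff₀ hν hν]
      nlinarith [mul_nonneg (sub_nonneg.mpr hbk) (mul_nonneg (by linarith : (0:ℝ) ≤ b) hν.le)]
    have hspreadR : |(η₁ : ℝ) - (η₂ : ℝ)| ≤ b - 1 := by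
      have h1 : |((η₁ - η₂ : ℤ) : ℝ)| ≤ ((βZ α p : ℤ) : ℝ) - 1 := by
        rw [← Int.cast_abs]
        have : ((|η₁ - η₂| : ℤ) : ℝ) ≤ (((βZ α p : ℤ) - 1 : ℤ) : ℝ) := by exact_mod_cast hspread
        push_cast at this ⊢
        linarith
      push_cast at h1
      convert h1 using 2 <;> push_cast <;> ring
    -- combine
    have hcomb : |T| ≤ 2 * L + μ * (b - 1) := by
      have hspreadR' : |(η₂ : ℝ) - (η₁ : ℝ)| ≤ b - 1 := by
        rw [abs_sub_comm]; exact hspreadR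
      have e1 : T = (ω - μ * η₂) - (ω - T - μ * η₁) + μ * ((η₂:ℝ) - η₁) := by ring
      calc |T| = |(ω - μ * η₂) - (ω - T - μ * η₁) + μ * ((η₂:ℝ) - η₁)| := by rw [← e1]
        _ ≤ |(ω - μ * η₂) - (ω - T - μ * η₁)| + |μ * ((η₂:ℝ) - η₁)| := abs_add_le _ _
        _ ≤ (|ω - μ * η₂| + |ω - T - μ * η₁|) + μ * |(η₂:ℝ) - η₁| := by
            rw [abs_mul, abs_of_pos hμ]
            exact add_le_add (abs_sub _ _) le_rfl
        _ ≤ (L + L) + μ * (b - 1) := by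
            refine add_le_add (add_le_add hb₂ hb₁) ?_
            exact mul_le_mul_of_nonneg_left hspreadR' hμ.le
        _ = 2 * L + μ * (b - 1) := by ring
    -- but |T| ≥ b/ν > b (2L+μ) ≥ 2L + μ b > 2L + μ(b-1)
    have hinv : 2 * L + μ < 1 / ν := by
      rw [lt_div_iff₀ hν]
      have h2Lμ : 0 < 2 * L + μ := by linarith
      calc (2 * L + μ) * ν < (2 * L + μ) * (2 * L + μ)⁻¹ := by
            exact mul_lt_mul_of_pos_left hν' h2Lμ
        _ = 1 := mul_inv_cancel₀ (ne_of_gt h2Lμ)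
    have : b * (2 * L + μ) < b / ν := by
      rw [div_eq_mul_inv, ← one_div]
      exact mul_lt_mul_of_pos_left hinv (by linarith)
    nlinarith
  constructor
  · intro p k hk
    rw [Set.disjoint_left]
    intro ω hω1 hω2
    rcases key p k hk ω with h | h
    · exact hω1 h
    · exact hω2 h
  · intro f ω
    have hz : ∀ (p : ℤ) (k : {k : ℤ // k ≠ 0}),
        f (ω - ((k : ℤ) : ℝ) * (βZ α p : ℝ) / ν) *
          (starRingEnd ℂ) (Φ α μ (𝓕 ⇑φ) p (ω - ((k : ℤ) : ℝ) * (βZ α p : ℝ) / ν)) *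
            Φ α μ (𝓕 ⇑φ) p ω = 0 := by
      intro p k
      rcases key p k.1 k.2 ω with h | h
      · rw [h]; simp
      · rw [h]; simp
    simp only [hz, tsum_zero]
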